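/- (i) A point a ∈ V* is regular if and only if a lies on no wall S_{Π,l}. (ii) Two regular points a, b ∈ V* satisfy a ∼ b if and only if a and b lie in the same connected component of the complement in V* of the union of all walls S_{Π,l} (over all nontrivial partitions Π and all l ∈ ℤ). -/

import Mathlib

open scoped BigOperators

attribute [local instance] Classical.propDecidable

noncomputable section

namespace Verlinde


variable {r : ℕ}

/-- The root `α^{ij} = e_i - e_j`, viewed as the linear functional `x_i - x_j`. -/
def stdRoot (r : ℕ) (i j : Fin r) : Fin r → ℝ :=
  fun t => (if t = i then 1 else 0) - (if t = j then 1 else 0)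

/-- `B ∈ 𝓑`: an ordered tuple of roots forming a linear basis of
`V* = {a : ∑ i, a i = 0}`. -/
def IsOB (r : ℕ) (B : Fin (r - 1) → Fin r → ℝ) : Prop :=
  (∀ m, ∃ i j, i ≠ j ∧ B m = stdRoot r i j) ∧
    LinearIndependent ℝ B ∧
    ∀ a : Fin r → ℝ, (∑ i, a i) = 0 → a ∈ Submodule.span ℝ (Set.range B)

/-- Coordinates of `a` with respect to the tuple `B` (junk unless such
coordinates exist; they are unique when `B` is linearly independent). -/
def coordsOf (B : Fin (r - 1) → Fin r → ℝ) (a : Fin r → ℝ) : Fin (r - 1) → ℝ :=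
  if h : ∃ c : Fin (r - 1) → ℝ, a = ∑ j, c j • B j then h.choose else 0

/-- The integer part `[a]_B ∈ Λ`. -/
def intPart (B : Fin (r - 1) → Fin r → ℝ) (a : Fin r → ℝ) : Fin r → ℝ :=
  ∑ j, (⌊coordsOf B a j⌋ : ℝ) • B j

/-- The fractional part `{a}_B`. -/
def fracPart (B : Fin (r - 1) → Fin r → ℝ) (a : Fin r → ℝ) : Fin r → ℝ :=
  a - intPart B a

/-- `a ∈ V*` is regular if all its `B`-coordinates are non-integral, for every `B ∈ 𝓑`,
i.e. `{a}_B ∈ ∑_j (0,1)·β^{[j]}` for every `B ∈ 𝓑`. -/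
def IsRegular (r : ℕ) (a : Fin r → ℝ) : Prop :=
  ∀ B, IsOB r B → ∀ j, Int.fract (coordsOf B a j) ≠ 0

/-- The flag `Fl(B)`: `Fl(B) j = span (β^{[j]}, …, β^{[r-1]})`. -/
def flagOf (B : Fin (r - 1) → Fin r → ℝ) : Fin (r - 1) → Submodule ℝ (Fin r → ℝ) :=
  fun j => Submodule.span ℝ {x | ∃ i, j ≤ i ∧ B i = x}

/-- `B ⊣ C`. -/
def Dashv (B C : Fin (r - 1) → Fin r → ℝ) : Prop :=
  ∀ τ : Equiv.Perm (Fin (r - 1)), flagOf (B ∘ τ) ≠ flagOf C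

/-- A diagonal basis: a subset of `𝓑` of cardinality `(r-1)!` any two distinct
members of which satisfy `B ⊣ C`. -/
def IsDiagonalBasis (r : ℕ) (D : Finset (Fin (r - 1) → Fin r → ℝ)) : Prop :=
  D.card = (r - 1).factorial ∧ (∀ B ∈ D, IsOB r B) ∧
    ∀ B ∈ D, ∀ C ∈ D, B ≠ C → Dashv B C

/-- The index of the last coordinate (`r` in `1`-indexed notation). -/
def lastI (r : ℕ) (h : 0 < r) : Fin r := ⟨r - 1, by omega⟩

/-- `ρ = ((r-1)/2, (r-3)/2, …, (1-r)/2)`. -/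
def rho (r : ℕ) : Fin r → ℝ := fun i => ((r : ℝ) - 1) / 2 - (i : ℝ)

/-- `σ · a`, where `(σ·a)_i = a_{σ⁻¹ i}`. -/
def permVec (σ : Equiv.Perm (Fin r)) (a : Fin r → ℝ) : Fin r → ℝ := fun i => a (σ⁻¹ i)

/-- A nontrivial (ordered) partition `Π = (Π′, Π″)`, encoded by `Π′ = P`:
both parts nonempty and `r ∈ Π″`. -/
def NontrivPart (r : ℕ) (h : 0 < r) (P : Finset (Fin r)) : Prop :=
  P.Nonempty ∧ lastI r h ∉ P

/-- The wall `S_{Π,l} ⊆ V*`. -/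
def wallSet (r : ℕ) (P : Finset (Fin r)) (l : ℤ) : Set (Fin r → ℝ) :=
  {c | (∑ i, c i) = 0 ∧ (∑ i ∈ P, c i) = (l : ℝ)}

/-- The simplex `Δ` of admissible parabolic weights. -/
def DeltaSet (r : ℕ) (h : 0 < r) : Set (Fin r → ℝ) :=
  {c | (∑ i, c i) = 0 ∧ (∀ i j : Fin r, i < j → c j < c i) ∧
    c ⟨0, h⟩ - c (lastI r h) < 1}

/-- The chamber of a (regular) point `c ∈ V*`. -/
def chamberOf (r : ℕ) (c : Fin r → ℝ) : Set (Fin r → ℝ) :=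
  {b | (∑ i, b i) = 0 ∧ IsRegular r b ∧ ∀ B, IsOB r B → intPart B b = intPart B c}

/-- `{i,j}` is an edge of `Tree(B)`. -/
def IsTreeEdge (B : Fin (r - 1) → Fin r → ℝ) (i j : Fin r) : Prop :=
  ∃ m, B m = stdRoot r i j ∨ B m = stdRoot r j i

/-- `B` splits along the partition `Π` (with `Π′ = P`): exactly one edge of
`Tree(B)` joins `Π′` and `Π″`. -/
def SplitsAlong (B : Fin (r - 1) → Fin r → ℝ) (P : Finset (Fin r)) : Prop :=
  ∃! pr : Fin r × Fin r, pr.1 ∈ P ∧ pr.2 ∉ P ∧ IsTreeEdge B pr.1 pr.2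

/-- The linking root `β_link = α^{pq}` with `p ∈ Π′`, `q ∈ Π″`. -/
def betaLink (B : Fin (r - 1) → Fin r → ℝ) (P : Finset (Fin r)) : Fin r → ℝ :=
  if h : ∃ pr : Fin r × Fin r, pr.1 ∈ P ∧ pr.2 ∉ P ∧ IsTreeEdge B pr.1 pr.2 then
    stdRoot r h.choose.1 h.choose.2
  else 0


/-! ### Auxiliary lemmas -/

lemma sum_stdRoot_subset (i j : Fin r) (S : Finset (Fin r)) :
    ∑ t ∈ S, stdRoot r i j t =
      (if i ∈ S then (1 : ℝ) else 0) - (if j ∈ S then (1 : ℝ) else 0) := by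
  unfold stdRoot
  rw [Finset.sum_sub_distrib]
  rw [Finset.sum_ite_eq' S i (fun _ => (1 : ℝ)), Finset.sum_ite_eq' S j (fun _ => (1 : ℝ))]

lemma sum_stdRoot (i j : Fin r) (hij : i ≠ j) : (∑ t, stdRoot r i j t) = 0 := by
  rw [show (∑ t, stdRoot r i j t) = ∑ t ∈ Finset.univ, stdRoot r i j t from rfl,
    sum_stdRoot_subset]
  simp

/-- Uniqueness of coordinates. -/
lemma coordsOf_eq (B : Fin (r - 1) → Fin r → ℝ) (hli : LinearIndependent ℝ B)
    {a : Fin r → ℝ} {c : Fin (r - 1) → ℝ} (h : a = ∑ j, c j • B j) :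
    coordsOf B a = c := by
  have hex : ∃ c : Fin (r - 1) → ℝ, a = ∑ j, c j • B j := ⟨c, h⟩
  have h2 := hex.choose_spec
  have key : ∀ j, hex.choose j - c j = 0 := by
    apply Fintype.linearIndependent_iff.mp hli (fun j => hex.choose j - c j)
    have : ∑ j, (hex.choose j - c j) • B j
        = (∑ j, hex.choose j • B j) - ∑ j, c j • B j := by
      rw [← Finset.sum_sub_distrib]
      exact Finset.sum_congr rfl fun j _ => sub_smul _ _ _
    rw [this, ← h2, ← h, sub_self]
  rw [coordsOf, dif_pos hex]
  funext j
  have := key j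
  linarith

/-- Evaluation of a coordinate via a "dual" subset `S`. -/
lemma coordsOf_eq_sum_subset {B : Fin (r - 1) → Fin r → ℝ} (hB : IsOB r B)
    (m : Fin (r - 1)) (S : Finset (Fin r))
    (hS : ∀ k, (∑ i ∈ S, B k i) = if k = m then (1 : ℝ) else 0)
    (a : Fin r → ℝ) (ha : (∑ i, a i) = 0) :
    coordsOf B a m = ∑ i ∈ S, a i := by
  obtain ⟨c, hc⟩ := (Submodule.mem_span_range_iff_exists_fun ℝ).mp (hB.2.2 a ha)
  rw [coordsOf_eq B hB.2.1 hc.symm]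
  have : ∑ i ∈ S, a i = ∑ i ∈ S, ∑ k, c k * B k i := by
    rw [← hc]; exact Finset.sum_congr rfl fun i _ => by simp [Finset.sum_apply]
  rw [this, Finset.sum_comm]
  have : ∀ k, (∑ i ∈ S, c k * B k i) = if k = m then c k else 0 := by
    intro k
    rw [← Finset.mul_sum, hS k]
    by_cases h : k = m <;> simp [h]
  rw [Finset.sum_congr rfl fun k _ => this k, Finset.sum_ite_eq' Finset.univ m c]
  simp

/-- The sum functional. -/
def sumLM (r : ℕ) : (Fin r → ℝ) →ₗ[ℝ] ℝ where
  toFun x := ∑ i, x i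
  map_add' x y := by simp [Finset.sum_add_distrib]
  map_smul' c x := by simp [Finset.mul_sum]

/-- Spanning is automatic from linear independence, by dimension count. -/
lemma span_eq_of_li (hr : 1 ≤ r) (B : Fin (r - 1) → Fin r → ℝ)
    (hli : LinearIndependent ℝ B) (h0 : ∀ k, (∑ i, B k i) = 0) :
    ∀ a : Fin r → ℝ, (∑ i, a i) = 0 → a ∈ Submodule.span ℝ (Set.range B) := by
  intro a ha
  have hrange : LinearMap.range (sumLM r) = ⊤ := by
    rw [LinearMap.range_eq_top]
    intro y
    refine ⟨fun i => if i = ⟨0, hr⟩ then y else 0, ?_⟩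
    simp [sumLM, Finset.sum_ite_eq' Finset.univ (⟨0, hr⟩ : Fin r) (fun _ => y)]
  have hker : Module.finrank ℝ (LinearMap.ker (sumLM r)) = r - 1 := by
    have h1 := LinearMap.finrank_range_add_finrank_ker (sumLM r)
    rw [hrange] at h1
    simp only [finrank_top, Module.finrank_self] at h1
    have h2 : Module.finrank ℝ (Fin r → ℝ) = r := by simp
    omega
  have hle : Submodule.span ℝ (Set.range B) ≤ LinearMap.ker (sumLM r) := by
    rw [Submodule.span_le]
    rintro x ⟨k, rfl⟩
    exact h0 k
  have hspan : Module.finrank ℝ (Submodule.span ℝ (Set.range B)) = r - 1 := by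
    rw [finrank_span_eq_card hli]; simp
  have := Submodule.eq_of_le_of_finrank_le hle (by rw [hker, hspan])
  rw [this]
  exact ha

/-- For any `B ∈ 𝓑` and any index `m`, there is a nonempty proper subset `S`
dual to `m`. -/
lemma exists_dual_subset {B : Fin (r - 1) → Fin r → ℝ} (hB : IsOB r B)
    (m : Fin (r - 1)) :
    ∃ S : Finset (Fin r), S.Nonempty ∧ S ≠ Finset.univ ∧
      ∀ k, (∑ i ∈ S, B k i) = if k = m then (1 : ℝ) else 0 := by
  obtain ⟨i, j, hij, hBm⟩ := hB.1 m
  set Adj : Fin r → Fin r → Prop :=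
    fun x y => ∃ k, k ≠ m ∧ (B k = stdRoot r x y ∨ B k = stdRoot r y x) with hAdj
  have hAsymm : ∀ x y, Adj x y → Adj y x := by
    rintro x y ⟨k, hk, h⟩; exact ⟨k, hk, h.symm⟩
  set R : Fin r → Fin r → Prop := Relation.ReflTransGen Adj with hR
  set S : Finset (Fin r) := Finset.univ.filter (fun x => R i x) with hSdef
  have hmem : ∀ x, x ∈ S ↔ R i x := by intro x; simp [hSdef]
  have hclosed : ∀ x y, Adj x y → (x ∈ S ↔ y ∈ S) := by
    intro x y hxy
    rw [hmem, hmem]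
    exact ⟨fun h => h.tail hxy, fun h => h.tail (hAsymm _ _ hxy)⟩
  have hiS : i ∈ S := (hmem i).mpr Relation.ReflTransGen.refl
  have hjS : j ∉ S := by
    intro hj
    have key : ∀ y, R i y → stdRoot r i y ∈ Submodule.span ℝ (B '' {k | k ≠ m}) := by
      intro y hy
      induction hy with
      | refl =>
          have : stdRoot r i i = 0 := by funext t; simp [stdRoot]
          rw [this]; exact Submodule.zero_mem _
      | tail hby hadj ih =>
          rename_i y z
          obtain ⟨k, hk, hcase⟩ := hadj
          have hyz : stdRoot r y z ∈ Submodule.span ℝ (B '' {k | k ≠ m}) := by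
            have hBk : B k ∈ Submodule.span ℝ (B '' {k | k ≠ m}) :=
              Submodule.subset_span ⟨k, hk, rfl⟩
            rcases hcase with h | h
            · rw [← h]; exact hBk
            · have : stdRoot r y z = -(stdRoot r z y) := by
                funext t; simp only [stdRoot, Pi.neg_apply]; ring
              rw [this, ← h]; exact Submodule.neg_mem _ hBk
          have : stdRoot r i z = stdRoot r i y + stdRoot r y z := by
            funext t; simp only [stdRoot, Pi.add_apply]; ring
          rw [this]
          exact Submodule.add_mem _ ih hyz
    have hmem' : B m ∈ Submodule.span ℝ (B '' {k | k ≠ m}) := by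
      rw [hBm]; exact key j ((hmem j).mp hj)
    exact hB.2.1.notMem_span_image (s := {k | k ≠ m}) (by simp) hmem'
  refine ⟨S, ⟨i, hiS⟩, fun h => hjS (h ▸ Finset.mem_univ j), fun k => ?_⟩
  by_cases hk : k = m
  · subst hk
    rw [hBm, sum_stdRoot_subset, if_pos hiS, if_neg hjS, if_pos rfl]
    norm_num
  · obtain ⟨x, y, hxy, hBk⟩ := hB.1 k
    have : (x ∈ S ↔ y ∈ S) := hclosed x y ⟨k, hk, Or.inl hBk⟩
    rw [hBk, sum_stdRoot_subset, if_neg hk]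
    by_cases hx : x ∈ S
    · rw [if_pos hx, if_pos (this.mp hx)]; ring
    · rw [if_neg hx, if_neg (fun h => hx (this.mpr h))]; ring

lemma sum_subset_comb (S : Finset (Fin r)) (c : Fin (r - 1) → ℝ)
    (B : Fin (r - 1) → Fin r → ℝ) :
    ∑ i ∈ S, (∑ k, c k • B k) i = ∑ k, c k * ∑ i ∈ S, B k i := by
  have : ∀ i ∈ S, (∑ k, c k • B k) i = ∑ k, c k * B k i := by
    intro i _
    rw [Finset.sum_apply]
    exact Finset.sum_congr rfl fun k _ => rfl
  rw [Finset.sum_congr rfl this, Finset.sum_comm]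
  exact Finset.sum_congr rfl fun k _ => (Finset.mul_sum _ _ _).symm

/-- For every nonempty proper subset `P`, there is a basis `B ∈ 𝓑` and an index
`m` such that the `m`-th coordinate of any `a ∈ V*` is `∑ i ∈ P, a i`. -/
lemma exists_basis_with_coord (hr : 2 ≤ r) (P : Finset (Fin r))
    (hne : P.Nonempty) (hnu : P ≠ Finset.univ) :
    ∃ (B : Fin (r - 1) → Fin r → ℝ) (m : Fin (r - 1)), IsOB r B ∧
      ∀ a : Fin r → ℝ, (∑ i, a i) = 0 → coordsOf B a m = ∑ i ∈ P, a i := by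
  classical
  set l : List (Fin r) := P.toList ++ Pᶜ.toList with hl
  have hlen : l.length = r := by
    rw [hl, List.length_append, Finset.length_toList, Finset.length_toList,
      Finset.card_compl, Fintype.card_fin]
    have := Finset.card_le_univ P
    simp only [Finset.card_univ, Fintype.card_fin] at this
    omega
  have hnd : l.Nodup := by
    refine List.Nodup.append (Finset.nodup_toList P) (Finset.nodup_toList Pᶜ) ?_
    intro x hx hx'
    rw [Finset.mem_toList] at hx hx'
    exact (Finset.mem_compl.mp hx') hx
  set v : Fin r → Fin r := fun t => l[(t : ℕ)]'(by rw [hlen]; exact t.2) with hv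
  have hvinj : Function.Injective v := by
    intro s t h
    rw [hv] at h
    exact Fin.ext (hnd.getElem_inj_iff.mp h)
  set k := P.card with hkdef
  have hk1 : 1 ≤ k := Finset.card_pos.mpr hne
  have hkr : k < r := by
    have hle : k ≤ r := by
      have := Finset.card_le_univ P
      simpa using this
    rcases lt_or_eq_of_le hle with h | h
    · exact h
    · exact absurd ((Finset.card_eq_iff_eq_univ P).mp (by simp [← hkdef, h])) hnu
  have hvP : ∀ t : Fin r, v t ∈ P ↔ (t : ℕ) < k := by
    intro t
    constructor
    · intro ht
      by_contra hc
      push_neg at hc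
      have hlenP : P.toList.length ≤ (t : ℕ) := by rw [Finset.length_toList]; exact hc
      have : v t ∈ Pᶜ.toList := by
        rw [hv]
        simp only
        rw [List.getElem_append_right hlenP]
        exact List.getElem_mem _
      rw [Finset.mem_toList, Finset.mem_compl] at this
      exact this ht
    · intro ht
      have hlenP : (t : ℕ) < P.toList.length := by rw [Finset.length_toList]; exact ht
      have : v t ∈ P.toList := by
        rw [hv]
        simp only
        rw [List.getElem_append_left hlenP]
        exact List.getElem_mem _
      rwa [Finset.mem_toList] at this
  have hlt : ∀ t : Fin (r - 1), (t : ℕ) < r ∧ (t : ℕ) + 1 < r := by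
    intro t; have := t.2; omega
  set B : Fin (r - 1) → Fin r → ℝ :=
    fun t => stdRoot r (v ⟨(t : ℕ), (hlt t).1⟩) (v ⟨(t : ℕ) + 1, (hlt t).2⟩) with hB
  have hroot : ∀ t, ∃ i j, i ≠ j ∧ B t = stdRoot r i j := by
    intro t
    refine ⟨_, _, fun h => ?_, rfl⟩
    have := hvinj h
    rw [Fin.ext_iff] at this
    simp at this
  set St : Fin (r - 1) → Finset (Fin r) :=
    fun t => (Finset.univ.filter (fun s : Fin r => (s : ℕ) ≤ (t : ℕ))).image v with hSt
  have hmemSt : ∀ (t : Fin (r - 1)) (x : Fin r), v x ∈ St t ↔ (x : ℕ) ≤ (t : ℕ) := by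
    intro t x
    rw [hSt]
    simp only [Finset.mem_image, Finset.mem_filter, Finset.mem_univ, true_and]
    constructor
    · rintro ⟨s, hs, hvs⟩
      rwa [← hvinj hvs]
    · intro hx; exact ⟨x, hx, rfl⟩
  have hdual : ∀ t q : Fin (r - 1), (∑ i ∈ St t, B q i) = if q = t then (1 : ℝ) else 0 := by
    intro t q
    rw [hB]
    simp only
    rw [sum_stdRoot_subset]
    have h1 : v ⟨(q : ℕ), (hlt q).1⟩ ∈ St t ↔ (q : ℕ) ≤ (t : ℕ) := hmemSt t _
    have h2 : v ⟨(q : ℕ) + 1, (hlt q).2⟩ ∈ St t ↔ (q : ℕ) + 1 ≤ (t : ℕ) := hmemSt t _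
    by_cases h : q = t
    · subst h
      rw [if_pos (h1.mpr le_rfl), if_neg (fun hc => absurd (h2.mp hc) (by omega)),
        if_pos rfl]
      norm_num
    · rw [if_neg h]
      have hqt : (q : ℕ) ≠ (t : ℕ) := fun hc => h (Fin.ext hc)
      by_cases hle : (q : ℕ) ≤ (t : ℕ)
      · rw [if_pos (h1.mpr hle), if_pos (h2.mpr (by omega))]; ring
      · rw [if_neg (fun hc => hle (h1.mp hc)),
          if_neg (fun hc => hle (by have := h2.mp hc; omega))]
        ring
  have hli : LinearIndependent ℝ B := by
    rw [Fintype.linearIndependent_iff]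
    intro c hc t
    have := sum_subset_comb (St t) c B
    rw [hc] at this
    simp only [Pi.zero_apply, Finset.sum_const_zero] at this
    rw [Finset.sum_congr rfl (fun q (_ : q ∈ Finset.univ) => by rw [hdual t q])] at this
    simp only [mul_ite, mul_one, mul_zero,
      Finset.sum_ite_eq' Finset.univ t c, Finset.mem_univ, if_true] at this
    exact this.symm
  have hsum0 : ∀ q, (∑ i, B q i) = 0 := by
    intro q
    obtain ⟨i, j, hij, hBq⟩ := hroot q
    rw [hBq]
    exact sum_stdRoot i j hij
  have hOB : IsOB r B := ⟨hroot, hli, span_eq_of_li (by omega) B hli hsum0⟩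
  set m : Fin (r - 1) := ⟨k - 1, by omega⟩ with hm
  have hStm : St m = P := by
    have hvsurj : Function.Surjective v := Finite.injective_iff_surjective.mp hvinj
    ext x
    obtain ⟨s, rfl⟩ := hvsurj x
    rw [hmemSt, hvP]
    have : (m : ℕ) = k - 1 := rfl
    omega
  refine ⟨B, m, hOB, fun a ha => ?_⟩
  rw [coordsOf_eq_sum_subset hOB m (St m) (fun q => hdual m q) a ha, hStm]

/-- Regularity in terms of fractional parts of subset sums. -/
lemma isRegular_iff_fract (hr : 2 ≤ r) (a : Fin r → ℝ) (ha : (∑ i, a i) = 0) :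
    IsRegular r a ↔ ∀ S : Finset (Fin r), S.Nonempty → S ≠ Finset.univ →
      Int.fract (∑ i ∈ S, a i) ≠ 0 := by
  constructor
  · intro hreg S hS1 hS2
    obtain ⟨B, m, hOB, hcoord⟩ := exists_basis_with_coord hr S hS1 hS2
    rw [← hcoord a ha]
    exact hreg B hOB m
  · intro h B hOB m
    obtain ⟨S, hS1, hS2, hdual⟩ := exists_dual_subset hOB m
    rw [coordsOf_eq_sum_subset hOB m S hdual a ha]
    exact h S hS1 hS2

/-- Avoiding all walls in terms of fractional parts of subset sums. -/
lemma offwalls_iff (hr : 2 ≤ r) (c : Fin r → ℝ) (hc : (∑ i, c i) = 0) :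
    (∀ (P : Finset (Fin r)) (l : ℤ), NontrivPart r (lt_of_lt_of_le two_pos hr) P →
        c ∉ wallSet r P l) ↔
      (∀ S : Finset (Fin r), S.Nonempty → S ≠ Finset.univ →
        Int.fract (∑ i ∈ S, c i) ≠ 0) := by
  constructor
  · intro h S hSne hSu hfr
    have hx : ∑ i ∈ S, c i = (⌊∑ i ∈ S, c i⌋ : ℝ) := by
      have := Int.fract_add_floor (∑ i ∈ S, c i)
      rw [hfr] at this
      linarith
    by_cases hlast : lastI r (lt_of_lt_of_le two_pos hr) ∈ S
    · have hcne : Sᶜ.Nonempty := by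
        rw [Finset.nonempty_iff_ne_empty]
        intro h0
        exact hSu (by rwa [Finset.compl_eq_empty_iff] at h0)
      refine h Sᶜ (-⌊∑ i ∈ S, c i⌋) ⟨hcne, by simp [hlast]⟩ ⟨hc, ?_⟩
      have hsplit := Finset.sum_add_sum_compl S c
      rw [hc] at hsplit
      push_cast
      linarith [hx]
    · exact h S ⌊∑ i ∈ S, c i⌋ ⟨hSne, hlast⟩ ⟨hc, hx⟩
  · rintro h P l ⟨hPne, hPl⟩ ⟨-, hPsum⟩
    have hPu : P ≠ Finset.univ := fun hu => hPl (hu ▸ Finset.mem_univ _)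
    exact h P hPne hPu (by rw [hPsum]; exact Int.fract_intCast l)

/-- Equality of integer parts in terms of floors of coordinates. -/
lemma intPart_eq_iff_floors {B : Fin (r - 1) → Fin r → ℝ} (hB : IsOB r B)
    (a b : Fin r → ℝ) :
    intPart B a = intPart B b ↔
      ∀ j, ⌊coordsOf B a j⌋ = ⌊coordsOf B b j⌋ := by
  constructor
  · intro h j
    have h0 : ∑ j, ((⌊coordsOf B a j⌋ : ℝ) - (⌊coordsOf B b j⌋ : ℝ)) • B j = 0 := by
      have : ∀ j' ∈ Finset.univ, ((⌊coordsOf B a j'⌋ : ℝ) - (⌊coordsOf B b j'⌋ : ℝ)) • B j'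
          = (⌊coordsOf B a j'⌋ : ℝ) • B j' - (⌊coordsOf B b j'⌋ : ℝ) • B j' :=
        fun j' _ => sub_smul _ _ _
      rw [Finset.sum_congr rfl this, Finset.sum_sub_distrib]
      have := h
      unfold intPart at this
      rw [this, sub_self]
    have := Fintype.linearIndependent_iff.mp hB.2.1 _ h0 j
    have : (⌊coordsOf B a j⌋ : ℝ) = (⌊coordsOf B b j⌋ : ℝ) := by linarith
    exact_mod_cast this
  · intro h
    unfold intPart
    exact Finset.sum_congr rfl fun j _ => by rw [h j]

lemma convex_combo_lt {l c d p q : ℝ} (hc : l < c) (hd : l < d)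
    (hp : 0 ≤ p) (hq : 0 ≤ q) (hpq : p + q = 1) : l < p * c + q * d := by
  rcases hp.eq_or_lt with h | h
  · have : q = 1 := by linarith
    rw [← h, this]; linarith
  · have h1 : p * l < p * c := mul_lt_mul_of_pos_left hc h
    have h2 : q * l ≤ q * d := mul_le_mul_of_nonneg_left hd.le hq
    have h3 : p * l + q * l = l := by rw [← add_mul, hpq, one_mul]
    linarith

lemma convex_combo_lt' {u c d p q : ℝ} (hc : c < u) (hd : d < u)
    (hp : 0 ≤ p) (hq : 0 ≤ q) (hpq : p + q = 1) : p * c + q * d < u := by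
  have := convex_combo_lt (l := -u) (c := -c) (d := -d) (by linarith) (by linarith) hp hq hpq
  nlinarith

/-- Floors of subset sums are constant on connected components of any set on
which they are never integral. -/
lemma floor_sum_eq_of_component (W : Set (Fin r → ℝ)) (S : Finset (Fin r))
    (hW : ∀ c ∈ W, Int.fract (∑ i ∈ S, c i) ≠ 0)
    {a b : Fin r → ℝ} (ha : a ∈ W) (hb : b ∈ connectedComponentIn W a) :
    ⌊∑ i ∈ S, a i⌋ = ⌊∑ i ∈ S, b i⌋ := by
  set K := connectedComponentIn W a with hK
  have hKpre : IsPreconnected K := isPreconnected_connectedComponentIn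
  have hcont : Continuous (fun c : Fin r → ℝ => ∑ i ∈ S, c i) :=
    continuous_finset_sum _ fun i _ => continuous_apply i
  set I : Set ℝ := (fun c : Fin r → ℝ => ∑ i ∈ S, c i) '' K with hI
  have hIpre : IsPreconnected I := hKpre.image _ hcont.continuousOn
  have haI : (∑ i ∈ S, a i) ∈ I := ⟨a, mem_connectedComponentIn ha, rfl⟩
  have hbI : (∑ i ∈ S, b i) ∈ I := ⟨b, hb, rfl⟩
  have hInoint : ∀ z : ℤ, ((z : ℝ)) ∉ I := by
    rintro z ⟨c, hcK, hcz⟩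
    have hcz' : (∑ i ∈ S, c i) = (z : ℝ) := hcz
    exact hW c (connectedComponentIn_subset W a hcK)
      (by rw [hcz']; exact Int.fract_intCast z)
  have key : ∀ x y : ℝ, x ∈ I → y ∈ I → ⌊x⌋ < ⌊y⌋ → False := by
    intro x y hx hy hxy
    have h0 : (⌊x⌋ : ℝ) + 1 ≤ (⌊y⌋ : ℝ) := by exact_mod_cast hxy
    have h1 : x ≤ (⌊y⌋ : ℝ) := by linarith [Int.lt_floor_add_one x]
    have h2 : ((⌊y⌋ : ℝ)) ≤ y := Int.floor_le y
    exact hInoint ⌊y⌋ (hIpre.Icc_subset hx hy ⟨h1, h2⟩)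
  rcases lt_trichotomy ⌊∑ i ∈ S, a i⌋ ⌊∑ i ∈ S, b i⌋ with h | h | h
  · exact absurd h (fun h => key _ _ haI hbI h)
  · exact h
  · exact absurd h (fun h => key _ _ hbI haI h)

/-- (i) Regularity is equivalent to lying on no wall.
(ii) Two regular points are equivalent (`[a]_B = [b]_B` for all `B ∈ 𝓑`)
iff they lie in the same connected component of the complement of the walls
in `V*`. -/
theorem regular_iff_offwalls_and_chambers_are_components
    (r : ℕ) (hr : 2 ≤ r) :
    (∀ a : Fin r → ℝ, (∑ i, a i) = 0 →
      (IsRegular r a ↔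
        ∀ (P : Finset (Fin r)) (l : ℤ), NontrivPart r (by omega) P →
          a ∉ wallSet r P l)) ∧
    (∀ a b : Fin r → ℝ, (∑ i, a i) = 0 → (∑ i, b i) = 0 →
      IsRegular r a → IsRegular r b →
      ((∀ B, IsOB r B → intPart B a = intPart B b) ↔
        b ∈ connectedComponentIn
          {c : Fin r → ℝ | (∑ i, c i) = 0 ∧
            ∀ (P : Finset (Fin r)) (l : ℤ), NontrivPart r (by omega) P →
              c ∉ wallSet r P l} a)) := by
  constructor
  · -- Part (i)
    intro a ha
    exact (isRegular_iff_fract hr a ha).trans (offwalls_iff hr a ha).symm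
  · -- Part (ii)
    intro a b ha hb hra hrb
    set W : Set (Fin r → ℝ) :=
      {c : Fin r → ℝ | (∑ i, c i) = 0 ∧
        ∀ (P : Finset (Fin r)) (l : ℤ), NontrivPart r (by omega) P →
          c ∉ wallSet r P l} with hWdef
    have hmemW : ∀ c : Fin r → ℝ, (∑ i, c i) = 0 →
        ((∀ S : Finset (Fin r), S.Nonempty → S ≠ Finset.univ →
          Int.fract (∑ i ∈ S, c i) ≠ 0) → c ∈ W) := by
      intro c hc hfr
      exact ⟨hc, (offwalls_iff hr c hc).mpr hfr⟩
    have hfra := (isRegular_iff_fract hr a ha).mp hra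
    have hfrb := (isRegular_iff_fract hr b hb).mp hrb
    have haW : a ∈ W := hmemW a ha hfra
    have hbW : b ∈ W := hmemW b hb hfrb
    have hWfr : ∀ c ∈ W, ∀ S : Finset (Fin r), S.Nonempty → S ≠ Finset.univ →
        Int.fract (∑ i ∈ S, c i) ≠ 0 := by
      rintro c ⟨hc0, hcw⟩
      exact (offwalls_iff hr c hc0).mp hcw
    constructor
    · -- equivalent ⟹ same component
      intro hint
      have hfloor : ∀ S : Finset (Fin r), S.Nonempty → S ≠ Finset.univ →
          ⌊∑ i ∈ S, a i⌋ = ⌊∑ i ∈ S, b i⌋ := by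
        intro S h1 h2
        obtain ⟨B, m, hOB, hcoord⟩ := exists_basis_with_coord hr S h1 h2
        have := (intPart_eq_iff_floors hOB a b).mp (hint B hOB) m
        rwa [hcoord a ha, hcoord b hb] at this
      set T : Set (Fin r → ℝ) :=
        {c : Fin r → ℝ | (∑ i, c i) = 0 ∧
          ∀ S : Finset (Fin r), S.Nonempty → S ≠ Finset.univ →
            ((⌊∑ i ∈ S, a i⌋ : ℝ) < ∑ i ∈ S, c i ∧
              ∑ i ∈ S, c i < (⌊∑ i ∈ S, a i⌋ : ℝ) + 1)} with hTdef
      have hconv : Convex ℝ T := by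
        rintro c ⟨hc0, hcb⟩ d ⟨hd0, hdb⟩ p q hp hq hpq
        have hsum : ∀ S : Finset (Fin r),
            (∑ i ∈ S, (p • c + q • d) i) = p * ∑ i ∈ S, c i + q * ∑ i ∈ S, d i := by
          intro S
          rw [Finset.mul_sum, Finset.mul_sum, ← Finset.sum_add_distrib]
          exact Finset.sum_congr rfl fun i _ => by simp [mul_comm]
        refine ⟨?_, fun S h1 h2 => ?_⟩
        · rw [show (∑ i, (p • c + q • d) i) = ∑ i ∈ Finset.univ, (p • c + q • d) i from rfl,
            hsum Finset.univ]
          rw [show (∑ i ∈ Finset.univ, c i) = 0 from hc0,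
            show (∑ i ∈ Finset.univ, d i) = 0 from hd0]
          ring
        · rw [hsum S]
          exact ⟨convex_combo_lt (hcb S h1 h2).1 (hdb S h1 h2).1 hp hq hpq,
            convex_combo_lt' (hcb S h1 h2).2 (hdb S h1 h2).2 hp hq hpq⟩
      have haT : a ∈ T := by
        refine ⟨ha, fun S h1 h2 => ⟨?_, Int.lt_floor_add_one _⟩⟩
        refine lt_of_le_of_ne (Int.floor_le _) fun hfl => ?_
        exact hfra S h1 h2 (by rw [Int.fract]; linarith [hfl])
      have hbT : b ∈ T := by
        refine ⟨hb, fun S h1 h2 => ?_⟩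
        rw [hfloor S h1 h2]
        exact ⟨lt_of_le_of_ne (Int.floor_le _) fun hfl =>
            hfrb S h1 h2 (by rw [Int.fract]; linarith [hfl]),
          Int.lt_floor_add_one _⟩
      have hTW : T ⊆ W := by
        rintro c ⟨hc0, hcb⟩
        refine hmemW c hc0 fun S h1 h2 hfr => ?_
        obtain ⟨hlo, hhi⟩ := hcb S h1 h2
        have hx : ∑ i ∈ S, c i = (⌊∑ i ∈ S, c i⌋ : ℝ) := by
          have := Int.fract_add_floor (∑ i ∈ S, c i)
          rw [hfr] at this
          linarith
        rw [hx] at hlo hhi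
        have h1' : ⌊∑ i ∈ S, a i⌋ < ⌊∑ i ∈ S, c i⌋ := by exact_mod_cast hlo
        have h2' : (⌊∑ i ∈ S, c i⌋ : ℝ) < ((⌊∑ i ∈ S, a i⌋ + 1 : ℤ) : ℝ) := by
          push_cast; linarith
        have h2'' : ⌊∑ i ∈ S, c i⌋ < ⌊∑ i ∈ S, a i⌋ + 1 := by exact_mod_cast h2'
        omega
      exact hconv.isPreconnected.subset_connectedComponentIn haT hTW hbT
    · -- same component ⟹ equivalent
      intro hcomp B hOB
      refine (intPart_eq_iff_floors hOB a b).mpr fun j => ?_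
      obtain ⟨S, h1, h2, hdual⟩ := exists_dual_subset hOB j
      rw [coordsOf_eq_sum_subset hOB j S hdual a ha,
        coordsOf_eq_sum_subset hOB j S hdual b hb]
      exact floor_sum_eq_of_component W S
        (fun c hc => hWfr c hc S h1 h2) haW hcomp

end Verlinde
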